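/- Let M = ([n], 𝓘) be a matroid and let i ∈ [n]. Let w, ŵ : [n] → ℝ₊ be weight functions with ŵ(i) ≥ w(i) and ŵ(j) ≤ w(j) for all j ≠ i. If i is selected by the greedy algorithm run with weights w (sorting elements by nonincreasing weight, breaking ties by a fixed order, e.g. lower index first, and adding an element whenever it preserves independence), then i is also selected by the greedy algorithm run with weights ŵ using the same tie-breaking rule. -/

import Mathlib

open Finset
open scoped Classical

variable {n : ℕ}

/-- The list of indices sorted in nonincreasing order of weight,
breaking ties in favor of lower indices. -/
noncomputable def sortedList (n : ℕ) (w : Fin n → ℝ) : List (Fin n) :=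
  (List.finRange n).mergeSort (fun a b => decide (w b < w a ∨ (w a = w b ∧ a ≤ b)))

/-- Greedy: process the list in order, adding an element whenever independence is kept. -/
noncomputable def greedyAux (Indep : Finset (Fin n) → Prop) :
    List (Fin n) → Finset (Fin n) → Finset (Fin n)
  | [], I => I
  | a :: l, I => greedyAux Indep l (if Indep (insert a I) then insert a I else I)

/-- The greedy algorithm on a matroid with weights `w`. -/
noncomputable def greedy (Indep : Finset (Fin n) → Prop) (w : Fin n → ℝ) : Finset (Fin n) :=
  greedyAux Indep (sortedList n w) ∅

/-- The matroid rank function. -/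
noncomputable def rank (Indep : Finset (Fin n) → Prop) (S : Finset (Fin n)) : ℕ :=
  (S.powerset.filter Indep).sup Finset.card

section Aux
variable {Indep : Finset (Fin n) → Prop}

lemma aux_card_le_rank {B S : Finset (Fin n)} (hBS : B ⊆ S) (hB : Indep B) :
    B.card ≤ rank Indep S :=
  Finset.le_sup (by simp [Finset.mem_filter, Finset.mem_powerset, hBS, hB])

lemma aux_exists_basis (hEmpty : Indep ∅) (S : Finset (Fin n)) :
    ∃ B, B ⊆ S ∧ Indep B ∧ B.card = rank Indep S := by
  obtain ⟨B, hB, hEq⟩ := Finset.exists_mem_eq_sup (S.powerset.filter Indep)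
    ⟨∅, by simp [hEmpty]⟩ Finset.card
  simp only [Finset.mem_filter, Finset.mem_powerset] at hB
  exact ⟨B, hB.1, hB.2, hEq.symm⟩

lemma aux_rank_mono {S T : Finset (Fin n)} (h : S ⊆ T) : rank Indep S ≤ rank Indep T :=
  Finset.sup_mono (Finset.filter_subset_filter _ (Finset.powerset_mono.2 h))

lemma aux_extend (hEmpty : Indep ∅)
    (hExch : ∀ A B : Finset (Fin n), Indep A → Indep B → A.card < B.card →
      ∃ x ∈ B, x ∉ A ∧ Indep (insert x A)) :
    ∀ (k : ℕ) (B S : Finset (Fin n)), Indep B → B ⊆ S → rank Indep S ≤ B.card + k →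
      ∃ B', B ⊆ B' ∧ B' ⊆ S ∧ Indep B' ∧ B'.card = rank Indep S := by
  intro k
  induction k with
  | zero =>
    intro B S hB hBS hle
    exact ⟨B, Finset.Subset.refl _, hBS, hB,
      le_antisymm (aux_card_le_rank hBS hB) (by omega)⟩
  | succ k ih =>
    intro B S hB hBS hle
    by_cases h : rank Indep S ≤ B.card
    · exact ⟨B, Finset.Subset.refl _, hBS, hB, le_antisymm (aux_card_le_rank hBS hB) h⟩
    · obtain ⟨C, hCS, hC, hCcard⟩ := aux_exists_basis hEmpty S
      obtain ⟨x, hxC, hxB, hxI⟩ := hExch B C hB hC (by omega)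
      have hsub : insert x B ⊆ S := Finset.insert_subset (hCS hxC) hBS
      have hcard : (insert x B).card = B.card + 1 := Finset.card_insert_of_notMem hxB
      obtain ⟨B', h1, h2, h3, h4⟩ := ih (insert x B) S hxI hsub (by omega)
      exact ⟨B', (Finset.subset_insert _ _).trans h1, h2, h3, h4⟩

lemma aux_basis_insert (hEmpty : Indep ∅)
    (hExch : ∀ A B : Finset (Fin n), Indep A → Indep B → A.card < B.card →
      ∃ x ∈ B, x ∉ A ∧ Indep (insert x A))
    {a : Fin n} {S B : Finset (Fin n)} (haS : a ∉ S) (hBS : B ⊆ S) (hB : Indep B)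
    (hcard : B.card = rank Indep S) :
    Indep (insert a B) ↔ rank Indep S < rank Indep (insert a S) := by
  constructor
  · intro h
    have haB : a ∉ B := fun hc => haS (hBS hc)
    have : (insert a B).card ≤ rank Indep (insert a S) :=
      aux_card_le_rank (Finset.insert_subset_insert _ hBS) h
    rw [Finset.card_insert_of_notMem haB] at this
    omega
  · intro h
    obtain ⟨C, hCS, hC, hCcard⟩ := aux_exists_basis hEmpty (insert a S)
    obtain ⟨x, hxC, hxB, hxI⟩ := hExch B C hB hC (by omega)
    rcases Finset.mem_insert.1 (hCS hxC) with rfl | hxS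
    · exact hxI
    · exfalso
      have : (insert x B).card ≤ rank Indep S :=
        aux_card_le_rank (Finset.insert_subset hxS hBS) hxI
      rw [Finset.card_insert_of_notMem hxB] at this
      omega

lemma aux_rank_insert_le (hEmpty : Indep ∅)
    (hDown : ∀ A B : Finset (Fin n), A ⊆ B → Indep B → Indep A)
    (a : Fin n) (S : Finset (Fin n)) :
    rank Indep (insert a S) ≤ rank Indep S + 1 := by
  obtain ⟨C, hCS, hC, hCcard⟩ := aux_exists_basis hEmpty (insert a S)
  have h1 : C.erase a ⊆ S := by
    intro x hx
    rcases Finset.mem_insert.1 (hCS (Finset.mem_of_mem_erase hx)) with rfl | h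
    · exact absurd rfl (Finset.ne_of_mem_erase hx)
    · exact h
  have h2 : (C.erase a).card ≤ rank Indep S :=
    aux_card_le_rank h1 (hDown _ _ (Finset.erase_subset _ _) hC)
  have h3 : C.card ≤ (C.erase a).card + 1 := by
    by_cases h : a ∈ C
    · rw [Finset.card_erase_of_mem h]; omega
    · rw [Finset.erase_eq_of_notMem h]; omega
  omega

lemma aux_span_mono (hEmpty : Indep ∅)
    (hDown : ∀ A B : Finset (Fin n), A ⊆ B → Indep B → Indep A)
    (hExch : ∀ A B : Finset (Fin n), Indep A → Indep B → A.card < B.card →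
      ∃ x ∈ B, x ∉ A ∧ Indep (insert x A))
    {a : Fin n} {S T : Finset (Fin n)} (hST : S ⊆ T) (haT : a ∉ T)
    (h : rank Indep (insert a S) = rank Indep S) :
    rank Indep (insert a T) = rank Indep T := by
  have haS : a ∉ S := fun hc => haT (hST hc)
  obtain ⟨B, hBS, hB, hBcard⟩ := aux_exists_basis hEmpty S
  obtain ⟨B', hBB', hB'T, hB', hB'card⟩ :=
    aux_extend hEmpty hExch (rank Indep T) B T hB (hBS.trans hST) (by omega)
  by_contra hne
  have hlt : rank Indep T < rank Indep (insert a T) :=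
    lt_of_le_of_ne (aux_rank_mono (Finset.subset_insert _ _)) (Ne.symm hne)
  have hIns : Indep (insert a B') :=
    (aux_basis_insert hEmpty hExch haT hB'T hB' hB'card).2 hlt
  have hInsB : Indep (insert a B) :=
    hDown _ _ (Finset.insert_subset_insert _ hBB') hIns
  have := (aux_basis_insert hEmpty hExch haS hBS hB hBcard).1 hInsB
  omega

lemma aux_subset_greedyAux (Indep : Finset (Fin n) → Prop) :
    ∀ (l : List (Fin n)) (I : Finset (Fin n)), I ⊆ greedyAux Indep l I := by
  intro l
  induction l with
  | nil => intro I; simp [greedyAux]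
  | cons a l ih =>
    intro I
    rw [greedyAux]
    by_cases h : Indep (insert a I)
    · rw [if_pos h]; exact (Finset.subset_insert _ _).trans (ih _)
    · rw [if_neg h]; exact ih _

lemma aux_greedyAux_subset (Indep : Finset (Fin n) → Prop) :
    ∀ (l : List (Fin n)) (I : Finset (Fin n)), greedyAux Indep l I ⊆ I ∪ l.toFinset := by
  intro l
  induction l with
  | nil => intro I; simp [greedyAux]
  | cons a l ih =>
    intro I
    rw [greedyAux]
    by_cases h : Indep (insert a I)
    · rw [if_pos h]
      refine (ih _).trans ?_
      intro x hx
      rcases Finset.mem_union.1 hx with hx | hx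
      · rcases Finset.mem_insert.1 hx with rfl | hx
        · simp
        · exact Finset.mem_union_left _ hx
      · simp [hx]
    · rw [if_neg h]
      refine (ih _).trans ?_
      intro x hx
      rcases Finset.mem_union.1 hx with hx | hx
      · exact Finset.mem_union_left _ hx
      · simp [hx]
lemma aux_greedy_crit (hEmpty : Indep ∅)
    (hDown : ∀ A B : Finset (Fin n), A ⊆ B → Indep B → Indep A)
    (hExch : ∀ A B : Finset (Fin n), Indep A → Indep B → A.card < B.card →
      ∃ x ∈ B, x ∉ A ∧ Indep (insert x A)) :
    ∀ (l : List (Fin n)), l.Nodup → ∀ (P I : Finset (Fin n)), I ⊆ P → Indep I →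
      I.card = rank Indep P → (∀ x ∈ l, x ∉ P) → ∀ a ∈ l,
      (a ∈ greedyAux Indep l I ↔
        rank Indep (P ∪ (l.takeWhile (· ≠ a)).toFinset) <
          rank Indep (insert a (P ∪ (l.takeWhile (· ≠ a)).toFinset))) := by
  intro l
  induction l with
  | nil => intro _ _ _ _ _ _ _ a ha; simp at ha
  | cons b l ih =>
    intro hnd P I hIP hI hIcard hdisj a ha
    have hbP : b ∉ P := hdisj b List.mem_cons_self
    have hndl : l.Nodup := (List.nodup_cons.1 hnd).2
    have hbl : b ∉ l := (List.nodup_cons.1 hnd).1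
    rcases List.mem_cons.1 ha with rfl | hal
    · -- a is the head
      have htw : List.takeWhile (· ≠ a) (a :: l) = [] := by
        simp [List.takeWhile_cons]
      rw [htw]
      simp only [List.toFinset_nil, Finset.union_empty]
      rw [greedyAux]
      by_cases h : Indep (insert a I)
      · rw [if_pos h]
        have : a ∈ greedyAux Indep l (insert a I) :=
          aux_subset_greedyAux Indep l _ (Finset.mem_insert_self _ _)
        simp only [this, true_iff]
        exact (aux_basis_insert hEmpty hExch hbP hIP hI hIcard).1 h
      · rw [if_neg h]
        have hnot : a ∉ greedyAux Indep l I := by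
          intro hc
          rcases Finset.mem_union.1 (aux_greedyAux_subset Indep l I hc) with hc | hc
          · exact hbP (hIP hc)
          · exact hbl (List.mem_toFinset.1 hc)
        simp only [hnot, false_iff, not_lt]
        exact le_of_not_gt
          (fun hlt => h ((aux_basis_insert hEmpty hExch hbP hIP hI hIcard).2 hlt))
    · -- a is in the tail
      have hab : a ≠ b := fun hc => hbl (hc ▸ hal)
      have htw : List.takeWhile (· ≠ a) (b :: l) = b :: List.takeWhile (· ≠ a) l := by
        simp [List.takeWhile_cons, hab.symm]
      rw [htw, greedyAux]
      have hunion : P ∪ (b :: List.takeWhile (· ≠ a) l).toFinset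
          = insert b P ∪ (List.takeWhile (· ≠ a) l).toFinset := by
        simp only [List.toFinset_cons]
        ext x
        simp only [Finset.mem_union, Finset.mem_insert, List.toFinset_cons,
          Finset.mem_insert]
        tauto
      rw [hunion]
      have hdisj' : ∀ x ∈ l, x ∉ insert b P := by
        intro x hx
        simp only [Finset.mem_insert, not_or]
        exact ⟨fun hc => hbl (hc ▸ hx), hdisj x (List.mem_cons_of_mem _ hx)⟩
      by_cases h : Indep (insert b I)
      · rw [if_pos h]
        have hbI : b ∉ I := fun hc => hbP (hIP hc)
        have hrank : (insert b I).card = rank Indep (insert b P) := by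
          have h1 : rank Indep P < rank Indep (insert b P) :=
            (aux_basis_insert hEmpty hExch hbP hIP hI hIcard).1 h
          have h2 : rank Indep (insert b P) ≤ rank Indep P + 1 :=
            aux_rank_insert_le hEmpty hDown b P
          rw [Finset.card_insert_of_notMem hbI]
          omega
        exact ih hndl (insert b P) (insert b I)
          (Finset.insert_subset_insert _ hIP) h hrank hdisj' a hal
      · rw [if_neg h]
        have hrank : I.card = rank Indep (insert b P) := by
          have h2 : rank Indep P ≤ rank Indep (insert b P) :=
            aux_rank_mono (Finset.subset_insert _ _)
          have h1 : ¬ rank Indep P < rank Indep (insert b P) :=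
            fun hlt => h ((aux_basis_insert hEmpty hExch hbP hIP hI hIcard).2 hlt)
          omega
        exact ih hndl (insert b P) I (hIP.trans (Finset.subset_insert _ _)) hI hrank hdisj' a hal


lemma aux_sorted_props (w : Fin n → ℝ) :
    (sortedList n w).Nodup ∧ (∀ x : Fin n, x ∈ sortedList n w) ∧
    List.Pairwise (fun a b : Fin n => w b < w a ∨ (w a = w b ∧ a ≤ b)) (sortedList n w) := by
  have hperm : (sortedList n w).Perm (List.finRange n) := List.mergeSort_perm _ _
  refine ⟨hperm.nodup_iff.2 (List.nodup_finRange n), fun x => hperm.mem_iff.2 (List.mem_finRange x), ?_⟩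
  have htrans : ∀ a b c : Fin n,
      (fun a b : Fin n => decide (w b < w a ∨ (w a = w b ∧ a ≤ b))) a b = true →
      (fun a b : Fin n => decide (w b < w a ∨ (w a = w b ∧ a ≤ b))) b c = true →
      (fun a b : Fin n => decide (w b < w a ∨ (w a = w b ∧ a ≤ b))) a c = true := by
    simp only [decide_eq_true_eq]
    rintro a b c (h1 | ⟨h1, h1'⟩) (h2 | ⟨h2, h2'⟩)
    · left; linarith
    · left; linarith
    · left; linarith
    · right; exact ⟨h1.trans h2, h1'.trans h2'⟩
  have htot : ∀ a b : Fin n,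
      ((fun a b : Fin n => decide (w b < w a ∨ (w a = w b ∧ a ≤ b))) a b ||
       (fun a b : Fin n => decide (w b < w a ∨ (w a = w b ∧ a ≤ b))) b a) = true := by
    intro a b
    simp only [Bool.or_eq_true, decide_eq_true_eq]
    rcases lt_trichotomy (w a) (w b) with h | h | h
    · right; left; exact h
    · rcases le_total a b with h' | h'
      · left; right; exact ⟨h, h'⟩
      · right; right; exact ⟨h.symm, h'⟩
    · left; left; exact h
  have := List.pairwise_mergeSort htrans htot (List.finRange n)
  have h2 : List.Pairwise
      (fun a b : Fin n => (decide (w b < w a ∨ (w a = w b ∧ a ≤ b))) = true)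
      (sortedList n w) := this
  refine h2.imp ?_
  intro a b h
  exact of_decide_eq_true h

lemma aux_prefix_eq (w : Fin n → ℝ) (i : Fin n) :
    ((sortedList n w).takeWhile (· ≠ i)).toFinset =
      Finset.univ.filter (fun j => j ≠ i ∧ (w i < w j ∨ (w j = w i ∧ j ≤ i))) := by
  obtain ⟨hnd, hmem, hsorted⟩ := aux_sorted_props w
  set l := sortedList n w with hl
  set t := l.takeWhile (· ≠ i) with ht
  set d := l.dropWhile (· ≠ i) with hd
  have htd : t ++ d = l := List.takeWhile_append_dropWhile
  have hiT : i ∉ t := by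
    intro hc
    have := List.mem_takeWhile_imp hc
    simp at this
  have hiD : i ∈ d := by
    have : i ∈ t ++ d := htd ▸ hmem i
    rcases List.mem_append.1 this with h | h
    · exact absurd h hiT
    · exact h
  have hdne : d ≠ [] := List.ne_nil_of_mem hiD
  have hhead : d.head hdne = i := by
    have := List.head_dropWhile_not (fun x => decide (x ≠ i)) (l := l) (hd ▸ hdne)
    simp only [decide_eq_false_iff_not, not_not] at this
    exact this
  have hdc : d = i :: d.tail := by
    conv_lhs => rw [← List.cons_head_tail hdne, hhead]
  have hpw : List.Pairwise (fun a b : Fin n => w b < w a ∨ (w a = w b ∧ a ≤ b)) (t ++ d) := by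
    rw [htd]; exact hsorted
  rw [List.pairwise_append] at hpw
  obtain ⟨hpt, hpd, hcross⟩ := hpw
  ext j
  simp only [List.mem_toFinset, Finset.mem_filter, Finset.mem_univ, true_and]
  constructor
  · intro hj
    have hne : j ≠ i := by
      have := List.mem_takeWhile_imp hj
      simpa using this
    exact ⟨hne, hcross j hj i hiD⟩
  · rintro ⟨hne, hr⟩
    have hjl : j ∈ t ++ d := htd ▸ hmem j
    rcases List.mem_append.1 hjl with h | h
    · exact h
    · exfalso
      rw [hdc] at h
      rcases List.mem_cons.1 h with rfl | h
      · exact hne rfl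
      · have hij : w j < w i ∨ (w i = w j ∧ i ≤ j) := by
          have := hpd
          rw [hdc] at this
          exact (List.pairwise_cons.1 this).1 j h
        rcases hr with h1 | ⟨h1, h1'⟩ <;> rcases hij with h2 | ⟨h2, h2'⟩
        · linarith
        · linarith
        · linarith
        · exact hne (le_antisymm h1' h2')

/-- Monotone selection: raising element `i`'s weight and lowering all other weights
preserves `i`'s selection by the matroid greedy algorithm (same tie-breaking rule). -/
theorem stmt_9 {n : ℕ} (Indep : Finset (Fin n) → Prop)
    (hEmpty : Indep ∅)
    (hDown : ∀ A B : Finset (Fin n), A ⊆ B → Indep B → Indep A)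
    (hExch : ∀ A B : Finset (Fin n), Indep A → Indep B → A.card < B.card →
      ∃ x ∈ B, x ∉ A ∧ Indep (insert x A))
    (i : Fin n) (w w2 : Fin n → ℝ)
    (hw : ∀ j, 0 < w j) (hw2 : ∀ j, 0 < w2 j)
    (hi : w i ≤ w2 i) (hj : ∀ j, j ≠ i → w2 j ≤ w j)
    (hsel : i ∈ greedy Indep w) :
    i ∈ greedy Indep w2 := by
  have hrank0 : (0 : ℕ) = rank Indep (∅ : Finset (Fin n)) := by
    refine le_antisymm (Nat.zero_le _) ?_
    refine Finset.sup_le ?_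
    intro B hB
    simp only [Finset.mem_filter, Finset.mem_powerset, Finset.subset_empty] at hB
    simp [hB.1]
  have hcrit : ∀ (v : Fin n → ℝ), (i ∈ greedy Indep v ↔
      rank Indep (((sortedList n v).takeWhile (· ≠ i)).toFinset) <
        rank Indep (insert i (((sortedList n v).takeWhile (· ≠ i)).toFinset))) := by
    intro v
    obtain ⟨hnd, hmem, _⟩ := aux_sorted_props v
    have := aux_greedy_crit hEmpty hDown hExch (sortedList n v) hnd ∅ ∅
      (Finset.Subset.refl _) hEmpty (by simpa using hrank0) (by simp) i (hmem i)
    simpa [greedy] using this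
  rw [hcrit, aux_prefix_eq] at hsel ⊢
  set P1 := Finset.univ.filter (fun j => j ≠ i ∧ (w i < w j ∨ (w j = w i ∧ j ≤ i))) with hP1
  set P2 := Finset.univ.filter (fun j => j ≠ i ∧ (w2 i < w2 j ∨ (w2 j = w2 i ∧ j ≤ i))) with hP2
  have hsub : P2 ⊆ P1 := by
    intro j hjm
    simp only [hP1, hP2, Finset.mem_filter, Finset.mem_univ, true_and] at hjm ⊢
    obtain ⟨hne, hr⟩ := hjm
    refine ⟨hne, ?_⟩
    have hle := hj j hne
    rcases hr with h | ⟨h, h'⟩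
    · left; linarith
    · have h1 : w i ≤ w j := by linarith
      rcases lt_or_eq_of_le h1 with h2 | h2
      · left; exact h2
      · right; exact ⟨h2.symm, h'⟩
  have hiP1 : i ∉ P1 := by simp [hP1]
  have hiP2 : i ∉ P2 := by simp [hP2]
  by_contra hcon
  have heq2 : rank Indep (insert i P2) = rank Indep P2 := by
    have := aux_rank_mono (Indep := Indep) (Finset.subset_insert i P2)
    omega
  have := aux_span_mono hEmpty hDown hExch hsub hiP1 heq2
  omega

end Aux
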